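/- Let Ω = ℝⁿ and let the kernel be translation invariant: K(x,y) = J(x − y) where J : ℝⁿ → ℝ is nonnegative, integrable, and normalized so that ∫_{ℝⁿ} J = 1. Let ρ be a recognition function satisfying the coordination condition, let u₀ : ℝⁿ → ℝ be bounded and Lipschitz with constant L₀, and let u be a solution of the initial value problem u_t = g[u] with initial datum u₀ on ℝⁿ × [0,T]. Let L_ρ be a Lipschitz constant for ρ' on [−2 sup|u₀|, 2 sup|u₀|]. Then for all x, h ∈ ℝⁿ and t ∈ [0,T], |u(x + h, t) − u(x, t)| ≤ |h| L₀ e^{2 L_ρ t}; i.e., u(·,t) is Lipschitz with constant L₀ e^{2 L_ρ t}, independent of the shape of J. -/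

import Mathlib

open MeasureTheory Set

private lemma statement8.auxChain (a c : ℝ) (ha : 1 ≤ a) (hc : 0 ≤ c) (f : ℕ → ℝ)
    (h0 : 0 ≤ f 0) :
    ∀ N : ℕ, (∀ k, k < N → f (k + 1) ≤ a * f k + c) → f N ≤ a ^ N * (f 0 + N * c) := by
  intro N
  induction N with
  | zero => intro _; simp
  | succ m ih =>
    intro hstep
    have h1 : f m ≤ a ^ m * (f 0 + m * c) := ih fun k hk => hstep k (Nat.lt_succ_of_lt hk)
    have h2 : f (m + 1) ≤ a * f m + c := hstep m (Nat.lt_succ_self m)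
    have ha0 : (0 : ℝ) ≤ a := by linarith
    have hp : (1 : ℝ) ≤ a ^ (m + 1) := one_le_pow₀ ha
    have hp' : (0 : ℝ) ≤ a ^ m := pow_nonneg ha0 m
    have hq : (0 : ℝ) ≤ f 0 + m * c := by positivity
    have hps : a ^ (m + 1) = a ^ m * a := pow_succ a m
    calc f (m + 1) ≤ a * (a ^ m * (f 0 + m * c)) + c := by nlinarith
      _ ≤ a ^ (m + 1) * (f 0 + (↑(m + 1) : ℝ) * c) := by push_cast; nlinarith

private lemma statement8.auxExp (x : ℝ) (hx : 0 ≤ x) (N : ℕ) :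
    (1 + x) ^ N ≤ Real.exp (N * x) := by
  calc (1 + x) ^ N ≤ (Real.exp x) ^ N :=
        pow_le_pow_left₀ (by positivity) (by linarith [Real.add_one_le_exp x]) N
    _ = Real.exp (N * x) := by rw [← Real.exp_nat_mul]

set_option maxHeartbeats 3200000 in
/-- Regularity for the Cauchy problem with a translation invariant kernel
`K(x,y) = J(x−y)`, `J ≥ 0`, `∫ J = 1`.  If `ρ` satisfies the coordination condition, `u₀` is
bounded and `L₀`-Lipschitz, `L_ρ` is a Lipschitz constant for `ρ'` on `[−2 sup|u₀|, 2 sup|u₀|]`,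
and `u` solves the IVP on `ℝⁿ × [0,T]`, then
`|u(x+h,t) − u(x,t)| ≤ |h| L₀ e^{2 L_ρ t}` for all `x, h ∈ ℝⁿ`, `t ∈ [0,T]`. -/
theorem statement8
    (n : ℕ)
    -- translation invariant kernel `J`, nonnegative, integrable, normalized:
    (J : EuclideanSpace ℝ (Fin n) → ℝ)
    (hJnonneg : ∀ z, 0 ≤ J z) (hJint : Integrable J) (hJnorm : (∫ z, J z) = 1)
    -- `ρ` is a recognition function satisfying the coordination condition:
    (ρ : ℝ → ℝ) (hρ : Differentiable ℝ ρ)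
    (hρ'lip : ∀ R : ℝ, 0 < R → ∃ L : ℝ, ∀ a b : ℝ, |a| ≤ R → |b| ≤ R →
        |deriv ρ a - deriv ρ b| ≤ L * |a - b|)
    (hcoord_pos : ∀ z : ℝ, 0 ≤ z → deriv ρ z ≤ 0)
    (hcoord_neg : ∀ z : ℝ, z ≤ 0 → 0 ≤ deriv ρ z)
    -- `u₀` bounded and Lipschitz with constant `L₀`; `M` bounds `|u₀|`:
    (u₀ : EuclideanSpace ℝ (Fin n) → ℝ)
    (L₀ : ℝ) (hu₀lip : ∀ x y, |u₀ x - u₀ y| ≤ L₀ * dist x y)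
    (M : ℝ) (hu₀bd : ∀ x, |u₀ x| ≤ M)
    -- `L_ρ` is a Lipschitz constant for `ρ'` on `[−2M, 2M]`:
    (L_ρ : ℝ) (hLρ : ∀ a b : ℝ, |a| ≤ 2 * M → |b| ≤ 2 * M →
        |deriv ρ a - deriv ρ b| ≤ L_ρ * |a - b|)
    -- `u` solves the IVP on `ℝⁿ × [0,T]`:
    (T : ℝ) (hT : 0 < T)
    (u : EuclideanSpace ℝ (Fin n) → ℝ → ℝ)
    (hucont : ContinuousOn (fun p : EuclideanSpace ℝ (Fin n) × ℝ => u p.1 p.2)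
        (univ ×ˢ Icc 0 T))
    (hubd : ∃ Mu : ℝ, ∀ x, ∀ t ∈ Icc (0:ℝ) T, |u x t| ≤ Mu)
    (hueq : ∀ x, ∀ t ∈ Icc (0:ℝ) T,
        u x t = u₀ x + ∫ s in (0:ℝ)..t, ∫ y, J (x - y) * deriv ρ (u x s - u y s)) :
    ∀ x h : EuclideanSpace ℝ (Fin n), ∀ t ∈ Icc (0:ℝ) T,
      |u (x + h) t - u x t| ≤ ‖h‖ * L₀ * Real.exp (2 * L_ρ * t) := by
  obtain ⟨Mu, hMu⟩ := hubd
  intro x h t ht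
  have hT0 : (0:ℝ) ≤ T := hT.le
  have h0T : (0:ℝ) ∈ Icc (0:ℝ) T := ⟨le_refl _, hT0⟩
  have hM0 : 0 ≤ M := (abs_nonneg _).trans (hu₀bd 0)
  have hMu0 : 0 ≤ Mu := (abs_nonneg _).trans (hMu 0 0 h0T)
  obtain ⟨L, hL⟩ := hρ'lip (2 * Mu + 1) (by positivity)
  set Lu : ℝ := max L 1 with hLudef
  have hLu1 : (1:ℝ) ≤ Lu := le_max_right _ _
  have hLu0 : (0:ℝ) < Lu := lt_of_lt_of_le one_pos hLu1
  have hLu : ∀ a b : ℝ, |a| ≤ 2 * Mu + 1 → |b| ≤ 2 * Mu + 1 →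
      |deriv ρ a - deriv ρ b| ≤ Lu * |a - b| := by
    intro a b ha hb
    exact (hL a b ha hb).trans
      (mul_le_mul_of_nonneg_right (le_max_left _ _) (abs_nonneg _))
  have hρ'0 : deriv ρ 0 = 0 := le_antisymm (hcoord_pos 0 le_rfl) (hcoord_neg 0 le_rfl)
  set C : ℝ := 2 * Lu * Mu with hCdef
  have hC0 : 0 ≤ C := by positivity
  -- pointwise bounds on `ρ'`
  have hRle : ∀ z : ℝ, |z| ≤ 2 * Mu → |deriv ρ z| ≤ Lu * |z| := by
    intro z hz
    have h1 := hLu z 0 (hz.trans (by linarith)) (by rw [abs_zero]; positivity)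
    simpa [hρ'0] using h1
  have hρ'C : ∀ z : ℝ, |z| ≤ 2 * Mu → |deriv ρ z| ≤ C := by
    intro z hz
    refine (hRle z hz).trans ?_
    rw [hCdef]
    nlinarith [mul_le_mul_of_nonneg_left hz hLu0.le]
  -- continuity of `ρ'`
  have hρ'cont : Continuous (deriv ρ) := by
    rw [continuous_iff_continuousAt]
    intro a
    obtain ⟨L', hL'⟩ := hρ'lip (|a| + 1) (by positivity)
    rw [Metric.continuousAt_iff]
    intro ε hε
    set L'' : ℝ := max L' 1 with hL''def
    have hL''1 : (1:ℝ) ≤ L'' := le_max_right _ _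
    have hL''0 : (0:ℝ) < L'' := lt_of_lt_of_le one_pos hL''1
    refine ⟨min 1 (ε / L''), by positivity, ?_⟩
    intro z hz
    rw [Real.dist_eq] at hz ⊢
    have hz1 : |z - a| < 1 := lt_of_lt_of_le hz (min_le_left _ _)
    have hz2 : |z - a| < ε / L'' := lt_of_lt_of_le hz (min_le_right _ _)
    have hzb : |z| ≤ |a| + 1 := by
      calc |z| = |(z - a) + a| := by ring_nf
        _ ≤ |z - a| + |a| := abs_add_le _ _
        _ ≤ |a| + 1 := by linarith
    have hab : |a| ≤ |a| + 1 := by linarith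
    calc |deriv ρ z - deriv ρ a| ≤ L' * |z - a| := hL' z a hzb hab
      _ ≤ L'' * |z - a| := mul_le_mul_of_nonneg_right (le_max_left _ _) (abs_nonneg _)
      _ < L'' * (ε / L'') := mul_lt_mul_of_pos_left hz2 hL''0
      _ = ε := by field_simp
  -- continuity of `u` in each variable
  have ucx : ∀ s, s ∈ Icc (0:ℝ) T → Continuous fun y => u y s := by
    intro s hs
    rw [← continuousOn_univ]
    have hc : Continuous fun y : EuclideanSpace ℝ (Fin n) => (y, s) := by fun_prop
    exact hucont.comp hc.continuousOn fun y _ => ⟨trivial, hs⟩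
  have uct : ∀ x', ContinuousOn (fun s => u x' s) (Icc 0 T) := by
    intro x'
    have hc : Continuous fun s : ℝ => (x', s) := by fun_prop
    exact hucont.comp hc.continuousOn fun s hs => ⟨trivial, hs⟩
  have hudiff : ∀ x' y s, s ∈ Icc (0:ℝ) T → |u x' s - u y s| ≤ 2 * Mu := by
    intro x' y s hs
    have h1 := hMu x' s hs
    have h2 := hMu y s hs
    calc |u x' s - u y s| ≤ |u x' s| + |u y s| := abs_sub _ _
      _ ≤ 2 * Mu := by linarith
  -- generic integrability of the integrand
  have hIntg : ∀ (x' : EuclideanSpace ℝ (Fin n)) (φ : EuclideanSpace ℝ (Fin n) → ℝ),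
      Continuous φ → (∀ y, |φ y| ≤ C) → Integrable (fun y => J (x' - y) * φ y) := by
    intro x' φ hφc hφb
    have h1 := (hJint.comp_sub_left x').bdd_mul hφc.aestronglyMeasurable
      (Filter.Eventually.of_forall fun y => by simpa using hφb y)
    rwa [show (fun y => φ y * J (x' - y)) = fun y => J (x' - y) * φ y from
      funext fun y => mul_comm _ _] at h1
  have hIntg' : ∀ x' s, s ∈ Icc (0:ℝ) T →
      Integrable (fun y => J (x' - y) * deriv ρ (u x' s - u y s)) := by
    intro x' s hs
    refine hIntg x' _ (hρ'cont.comp (continuous_const.sub (ucx s hs))) fun y => ?_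
    exact hρ'C _ (hudiff x' y s hs)
  -- the nonlocal operator
  set g : EuclideanSpace ℝ (Fin n) → ℝ → ℝ :=
    fun x' s => ∫ y, J (x' - y) * deriv ρ (u x' s - u y s) with hg
  have hueq' : ∀ x', ∀ t' ∈ Icc (0:ℝ) T, u x' t' = u₀ x' + ∫ s in (0:ℝ)..t', g x' s := by
    intro x' t' ht'
    simp only [hg]
    exact hueq x' t' ht'
  -- uniform bound on `g`
  have gbd : ∀ x' s, s ∈ Icc (0:ℝ) T → |g x' s| ≤ C := by
    intro x' s hs
    simp only [hg]
    rw [← Real.norm_eq_abs]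
    calc ‖∫ y, J (x' - y) * deriv ρ (u x' s - u y s)‖
        ≤ ∫ y, C * J (x' - y) := by
          refine norm_integral_le_of_norm_le ((hJint.comp_sub_left x').const_mul C)
            (Filter.Eventually.of_forall fun y => ?_)
          rw [norm_mul, Real.norm_eq_abs, Real.norm_eq_abs, abs_of_nonneg (hJnonneg _),
            mul_comm C (J (x' - y))]
          exact mul_le_mul_of_nonneg_left (hρ'C _ (hudiff x' y s hs)) (hJnonneg _)
      _ = C := by rw [integral_const_mul, integral_sub_left_eq_self, hJnorm, mul_one]
  -- continuity of `g x'` in time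
  have gcont : ∀ x', ContinuousOn (fun s => g x' s) (Icc 0 T) := by
    intro x'
    simp only [hg]
    refine continuousOn_of_dominated (bound := fun y => C * J (x' - y))
      (fun s hs => (hIntg' x' s hs).aestronglyMeasurable)
      (fun s hs => Filter.Eventually.of_forall fun y => ?_)
      ((hJint.comp_sub_left x').const_mul C)
      (Filter.Eventually.of_forall fun y => ?_)
    · show ‖J (x' - y) * deriv ρ (u x' s - u y s)‖ ≤ C * J (x' - y)
      rw [norm_mul, Real.norm_eq_abs, Real.norm_eq_abs, abs_of_nonneg (hJnonneg _),
        mul_comm C (J (x' - y))]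
      exact mul_le_mul_of_nonneg_left (hρ'C _ (hudiff x' y s hs)) (hJnonneg _)
    · exact continuousOn_const.mul
        (hρ'cont.comp_continuousOn ((uct x').sub (uct y)))
  have gII : ∀ x' t₁ t₂, 0 ≤ t₁ → t₁ ≤ t₂ → t₂ ≤ T →
      IntervalIntegrable (g x') volume t₁ t₂ := by
    intro x' t₁ t₂ h1 h2 h3
    apply ContinuousOn.intervalIntegrable
    refine (gcont x').mono ?_
    rw [uIcc_of_le h2]
    exact Icc_subset_Icc h1 h3
  -- the integral identity between two times
  have hstep_eq : ∀ x' t₁ t₂, 0 ≤ t₁ → t₁ ≤ t₂ → t₂ ≤ T →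
      u x' t₂ = u x' t₁ + ∫ s in t₁..t₂, g x' s := by
    intro x' t₁ t₂ h1 h2 h3
    have e2 := hueq' x' t₂ ⟨h1.trans h2, h3⟩
    have e1 := hueq' x' t₁ ⟨h1, h2.trans h3⟩
    have e3 : (∫ s in (0:ℝ)..t₂, g x' s) - ∫ s in (0:ℝ)..t₁, g x' s
        = ∫ s in t₁..t₂, g x' s :=
      intervalIntegral.integral_interval_sub_left
        (gII x' 0 t₂ le_rfl (h1.trans h2) h3) (gII x' 0 t₁ le_rfl h1 (h2.trans h3))
    rw [e2, e1]
    linarith [e3]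
  -- time-Lipschitz bound
  have timeLip : ∀ x' t₁ t₂, 0 ≤ t₁ → t₁ ≤ t₂ → t₂ ≤ T →
      |u x' t₂ - u x' t₁| ≤ C * (t₂ - t₁) := by
    intro x' t₁ t₂ h1 h2 h3
    rw [hstep_eq x' t₁ t₂ h1 h2 h3, add_sub_cancel_left, ← Real.norm_eq_abs]
    have hb : ∀ s ∈ uIoc t₁ t₂, ‖g x' s‖ ≤ C := by
      intro s hs
      rw [uIoc_of_le h2] at hs
      rw [Real.norm_eq_abs]
      exact gbd x' s ⟨h1.trans hs.1.le, hs.2.trans h3⟩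
    have h4 := intervalIntegral.norm_integral_le_of_norm_le_const hb
    rwa [abs_of_nonneg (by linarith : (0:ℝ) ≤ t₂ - t₁)] at h4
  -- the sup of |u|
  set P : ℝ → ℝ := fun s => ⨆ x', |u x' s| with hP
  have Pbdd : ∀ s, s ∈ Icc (0:ℝ) T → BddAbove (range fun x' => |u x' s|) := by
    intro s hs
    refine ⟨Mu, ?_⟩
    rintro _ ⟨x', rfl⟩
    exact hMu x' s hs
  have le_P : ∀ x' s, s ∈ Icc (0:ℝ) T → |u x' s| ≤ P s := by
    intro x' s hs
    simp only [hP]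
    exact le_ciSup (Pbdd s hs) x'
  have P_le : ∀ s b, (∀ x', |u x' s| ≤ b) → P s ≤ b := by
    intro s b hb
    simp only [hP]
    exact ciSup_le hb
  have hP0 : ∀ s, s ∈ Icc (0:ℝ) T → 0 ≤ P s :=
    fun s hs => (abs_nonneg _).trans (le_P 0 s hs)
  have hu0 : ∀ x', u x' 0 = u₀ x' := by
    intro x'
    rw [hueq' x' 0 h0T, intervalIntegral.integral_same, add_zero]
  have P0M : P 0 ≤ M := by
    refine P_le 0 M fun x' => ?_
    rw [hu0 x']
    exact hu₀bd x'
  -- maximum principle: one step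
  have MPstep : ∀ t₁ t₂, 0 ≤ t₁ → t₁ ≤ t₂ → t₂ ≤ T → Lu * (t₂ - t₁) ≤ 1 →
      P t₂ ≤ P t₁ + 2 * Lu * C * (t₂ - t₁) ^ 2 := by
    intro t₁ t₂ h1 h2 h3 hsmall
    have ht₁ : t₁ ∈ Icc (0:ℝ) T := ⟨h1, h2.trans h3⟩
    set Δ : ℝ := t₂ - t₁ with hΔ
    have hΔ0 : 0 ≤ Δ := by rw [hΔ]; linarith
    refine P_le t₂ _ fun x' => ?_
    have hIcc : ∀ s, s ∈ Icc t₁ t₂ → s ∈ Icc (0:ℝ) T :=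
      fun s hs => ⟨h1.trans hs.1, hs.2.trans h3⟩
    have hCsΔ : ∀ s, s ∈ Icc t₁ t₂ → C * (s - t₁) ≤ C * Δ := by
      intro s hs
      apply mul_le_mul_of_nonneg_left _ hC0
      rw [hΔ]; linarith [hs.2]
    have hub : ∀ y s, s ∈ Icc t₁ t₂ → u y s ≤ P t₁ + C * Δ := by
      intro y s hs
      have h4 := abs_le.1 (timeLip y t₁ s h1 hs.1 (hIcc s hs).2)
      have h5 := (abs_le.1 (le_P y t₁ ht₁)).2
      linarith [hCsΔ s hs]
    have hlb : ∀ y s, s ∈ Icc t₁ t₂ → -(P t₁ + C * Δ) ≤ u y s := by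
      intro y s hs
      have h4 := abs_le.1 (timeLip y t₁ s h1 hs.1 (hIcc s hs).2)
      have h5 := (abs_le.1 (le_P y t₁ ht₁)).1
      linarith [hCsΔ s hs]
    have hgup : ∀ s ∈ Icc t₁ t₂, g x' s ≤ Lu * (P t₁ - u x' t₁ + 2 * C * Δ) := by
      intro s hs
      have hsT := hIcc s hs
      have step1 : g x' s ≤ Lu * (P t₁ + C * Δ - u x' s) := by
        simp only [hg]
        have h7 : ∫ y, J (x' - y) * deriv ρ (u x' s - u y s)
            ≤ ∫ y, J (x' - y) * (Lu * (P t₁ + C * Δ - u x' s)) := by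
          refine integral_mono (hIntg' x' s hsT) ((hJint.comp_sub_left x').mul_const _)
            fun y => ?_
          refine mul_le_mul_of_nonneg_left ?_ (hJnonneg _)
          rcases le_or_gt (u y s) (u x' s) with hcs | hcs
          · refine (hcoord_pos _ (by linarith)).trans ?_
            have h8 := hub x' s hs
            apply mul_nonneg hLu0.le
            linarith
          · have hzabs : |u x' s - u y s| ≤ 2 * Mu := hudiff x' y s hsT
            have hd1 : deriv ρ (u x' s - u y s) ≤ |deriv ρ (u x' s - u y s)| := le_abs_self _
            have hd2 := hRle _ hzabs
            have heqa : |u x' s - u y s| = u y s - u x' s := by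
              rw [abs_of_neg (by linarith)]; ring
            have hy := hub y s hs
            nlinarith [hLu0.le]
        refine h7.trans (le_of_eq ?_)
        rw [integral_mul_const, integral_sub_left_eq_self, hJnorm, one_mul]
      refine step1.trans (mul_le_mul_of_nonneg_left ?_ hLu0.le)
      have hTL := (abs_le.1 (timeLip x' t₁ s h1 hs.1 hsT.2)).1
      linarith [hCsΔ s hs]
    have hgdown : ∀ s ∈ Icc t₁ t₂, -(Lu * (P t₁ + u x' t₁ + 2 * C * Δ)) ≤ g x' s := by
      intro s hs
      have hsT := hIcc s hs
      have step1 : -(Lu * (P t₁ + C * Δ + u x' s)) ≤ g x' s := by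
        simp only [hg]
        have h7 : ∫ y, J (x' - y) * (-(Lu * (P t₁ + C * Δ + u x' s)))
            ≤ ∫ y, J (x' - y) * deriv ρ (u x' s - u y s) := by
          refine integral_mono ((hJint.comp_sub_left x').mul_const _) (hIntg' x' s hsT)
            fun y => ?_
          refine mul_le_mul_of_nonneg_left ?_ (hJnonneg _)
          rcases le_or_gt (u x' s) (u y s) with hcs | hcs
          · refine le_trans ?_ (hcoord_neg _ (by linarith))
            have h8 := hlb x' s hs
            rw [neg_le, neg_zero]
            apply mul_nonneg hLu0.le
            linarith
          · have hzabs : |u x' s - u y s| ≤ 2 * Mu := hudiff x' y s hsT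
            have hd1 : -|deriv ρ (u x' s - u y s)| ≤ deriv ρ (u x' s - u y s) := neg_abs_le _
            have hd2 := hRle _ hzabs
            have heqa : |u x' s - u y s| = u x' s - u y s := abs_of_pos (by linarith)
            have hy := hlb y s hs
            nlinarith [hLu0.le]
        refine le_trans (le_of_eq ?_) h7
        rw [integral_mul_const, integral_sub_left_eq_self, hJnorm, one_mul]
      refine le_trans (neg_le_neg (mul_le_mul_of_nonneg_left ?_ hLu0.le)) step1
      have hTL := (abs_le.1 (timeLip x' t₁ s h1 hs.1 hsT.2)).2
      linarith [hCsΔ s hs]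
    have hIup : (∫ s in t₁..t₂, g x' s) ≤ Δ * (Lu * (P t₁ - u x' t₁ + 2 * C * Δ)) := by
      have h7 := intervalIntegral.integral_mono_on (f := g x')
        (g := fun _ => Lu * (P t₁ - u x' t₁ + 2 * C * Δ)) h2
        (gII x' t₁ t₂ h1 h2 h3) intervalIntegrable_const hgup
      refine h7.trans (le_of_eq ?_)
      rw [intervalIntegral.integral_const, smul_eq_mul, hΔ]
    have hIdown : -(Δ * (Lu * (P t₁ + u x' t₁ + 2 * C * Δ))) ≤ ∫ s in t₁..t₂, g x' s := by
      have h8 := intervalIntegral.integral_mono_on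
        (f := fun _ => -(Lu * (P t₁ + u x' t₁ + 2 * C * Δ))) (g := g x') h2
        intervalIntegrable_const (gII x' t₁ t₂ h1 h2 h3) hgdown
      refine le_trans (le_of_eq ?_) h8
      rw [intervalIntegral.integral_const, smul_eq_mul, hΔ]; ring
    have heq := hstep_eq x' t₁ t₂ h1 h2 h3
    have hPb := abs_le.1 (le_P x' t₁ ht₁)
    have hprod1 : 0 ≤ (P t₁ - u x' t₁) * (1 - Lu * Δ) :=
      mul_nonneg (by linarith [hPb.2]) (by linarith [hsmall])
    have hprod2 : 0 ≤ (P t₁ + u x' t₁) * (1 - Lu * Δ) :=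
      mul_nonneg (by linarith [hPb.1]) (by linarith [hsmall])
    rw [abs_le]
    constructor
    · nlinarith
    · nlinarith
  -- maximum principle
  have MP : ∀ x' s, s ∈ Icc (0:ℝ) T → |u x' s| ≤ M := by
    intro x' s hs
    refine (le_P x' s hs).trans ?_
    refine le_of_forall_pos_le_add fun ε hε => ?_
    obtain ⟨N, hN⟩ := exists_nat_gt (max (Lu * s) (2 * Lu * C * s ^ 2 / ε))
    have hmax0 : (0:ℝ) ≤ max (Lu * s) (2 * Lu * C * s ^ 2 / ε) :=
      le_max_of_le_left (mul_nonneg hLu0.le hs.1)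
    have hNpos : (0:ℝ) < N := lt_of_le_of_lt hmax0 hN
    have hNne : (N:ℝ) ≠ 0 := ne_of_gt hNpos
    set Δ : ℝ := s / N with hΔdef
    have hΔ0 : 0 ≤ Δ := div_nonneg hs.1 hNpos.le
    have hNΔ : (N:ℝ) * Δ = s := by rw [hΔdef]; field_simp
    have hLuΔ : Lu * Δ ≤ 1 := by
      rw [hΔdef, mul_div_assoc']
      rw [div_le_one hNpos]
      exact le_of_lt (lt_of_le_of_lt (le_max_left _ _) hN)
    have chain : ∀ k : ℕ, k ≤ N → P (k * Δ) ≤ P 0 + k * (2 * Lu * C * Δ ^ 2) := by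
      intro k hk
      induction k with
      | zero => simp
      | succ m ih =>
        have hm : m ≤ N := Nat.le_of_succ_le hk
        have hmr : ((m:ℝ) + 1) ≤ (N:ℝ) := by exact_mod_cast hk
        have h1 : 0 ≤ (m:ℝ) * Δ := by positivity
        have h2 : (m:ℝ) * Δ ≤ ((m:ℝ) + 1) * Δ :=
          mul_le_mul_of_nonneg_right (by linarith) hΔ0
        have h3 : ((m:ℝ) + 1) * Δ ≤ T := by
          have h4 : ((m:ℝ) + 1) * Δ ≤ (N:ℝ) * Δ := mul_le_mul_of_nonneg_right hmr hΔ0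
          rw [hNΔ] at h4
          linarith [hs.2]
        have hstep := MPstep ((m:ℝ) * Δ) (((m:ℝ) + 1) * Δ) h1 h2 h3
          (by rw [show ((m:ℝ) + 1) * Δ - (m:ℝ) * Δ = Δ by ring]; exact hLuΔ)
        rw [show ((m:ℝ) + 1) * Δ - (m:ℝ) * Δ = Δ by ring] at hstep
        have ihm := ih hm
        push_cast
        push_cast at ihm
        calc P (((m:ℝ) + 1) * Δ) ≤ P ((m:ℝ) * Δ) + 2 * Lu * C * Δ ^ 2 := hstep
          _ ≤ P 0 + (m:ℝ) * (2 * Lu * C * Δ ^ 2) + 2 * Lu * C * Δ ^ 2 := by linarith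
          _ = P 0 + ((m:ℝ) + 1) * (2 * Lu * C * Δ ^ 2) := by ring
    have hchainN := chain N le_rfl
    rw [hNΔ] at hchainN
    have hfin : (N:ℝ) * (2 * Lu * C * Δ ^ 2) ≤ ε := by
      have hq : 2 * Lu * C * s ^ 2 / ε < N := lt_of_le_of_lt (le_max_right _ _) hN
      have hq2 := (div_lt_iff₀ hε).1 hq
      have heq2 : (N:ℝ) * (2 * Lu * C * Δ ^ 2) = 2 * Lu * C * s ^ 2 / N := by
        rw [hΔdef]; field_simp
      rw [heq2, div_le_iff₀ hNpos]
      nlinarith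
    linarith [P0M]
  -- split on M
  rcases eq_or_lt_of_le hM0 with hM | hM
  · -- M = 0 : u ≡ 0
    have hz1 := MP (x + h) t ht
    have hz2 := MP x t ht
    have hL0 : 0 ≤ L₀ * ‖h‖ := by
      have h1 := hu₀lip (0 + h) 0
      have hd : dist ((0 : EuclideanSpace ℝ (Fin n)) + h) (0 : EuclideanSpace ℝ (Fin n))
          = ‖h‖ := by simp [dist_eq_norm]
      rw [hd] at h1
      exact (abs_nonneg _).trans h1
    have hle0 : |u (x + h) t - u x t| ≤ 0 := by
      calc |u (x + h) t - u x t| ≤ |u (x + h) t| + |u x t| := abs_sub _ _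
        _ ≤ 0 := by rw [← hM] at hz1 hz2; linarith
    refine hle0.trans ?_
    have hexp := Real.exp_pos (2 * L_ρ * t)
    nlinarith [mul_nonneg hL0 hexp.le]
  · -- M > 0
    have hLρ0 : 0 ≤ L_ρ := by
      have h1 := hLρ (2 * M) 0 (by rw [abs_of_nonneg (by linarith)])
        (by rw [abs_zero]; linarith)
      have h2 : (0:ℝ) ≤ L_ρ * |2 * M - 0| := (abs_nonneg _).trans h1
      rw [sub_zero, abs_of_nonneg (by linarith)] at h2
      nlinarith
    set w : ℝ → ℝ := fun s => ⨆ x', |u (x' + h) s - u x' s| with hw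
    have wbdd : ∀ s, s ∈ Icc (0:ℝ) T →
        BddAbove (range fun x' => |u (x' + h) s - u x' s|) := by
      intro s hs
      refine ⟨2 * Mu, ?_⟩
      rintro _ ⟨x', rfl⟩
      calc |u (x' + h) s - u x' s| ≤ |u (x' + h) s| + |u x' s| := abs_sub _ _
        _ ≤ 2 * Mu := by linarith [hMu (x' + h) s hs, hMu x' s hs]
    have le_w : ∀ x' s, s ∈ Icc (0:ℝ) T → |u (x' + h) s - u x' s| ≤ w s := by
      intro x' s hs
      simp only [hw]
      exact le_ciSup (wbdd s hs) x'
    have w_le : ∀ s b, (∀ x', |u (x' + h) s - u x' s| ≤ b) → w s ≤ b := by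
      intro s b hb
      simp only [hw]
      exact ciSup_le hb
    have hw0 : ∀ s, s ∈ Icc (0:ℝ) T → 0 ≤ w s :=
      fun s hs => (abs_nonneg _).trans (le_w 0 s hs)
    have w0le : w 0 ≤ L₀ * ‖h‖ := by
      refine w_le 0 _ fun x' => ?_
      rw [hu0, hu0]
      have h1 := hu₀lip (x' + h) x'
      have hd : dist (x' + h) x' = ‖h‖ := by simp [dist_eq_norm]
      rwa [hd] at h1
    -- one Grönwall step
    have Bstep : ∀ t₁ t₂, 0 ≤ t₁ → t₁ ≤ t₂ → t₂ ≤ T →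
        w t₂ ≤ (1 + 2 * L_ρ * (t₂ - t₁)) * w t₁ + 4 * L_ρ * C * (t₂ - t₁) ^ 2 := by
      intro t₁ t₂ h1 h2 h3
      have ht₁ : t₁ ∈ Icc (0:ℝ) T := ⟨h1, h2.trans h3⟩
      set Δ : ℝ := t₂ - t₁ with hΔ
      have hΔ0 : 0 ≤ Δ := by rw [hΔ]; linarith
      set W : ℝ := w t₁ + 2 * C * Δ with hW
      have hIcc : ∀ s, s ∈ Icc t₁ t₂ → s ∈ Icc (0:ℝ) T :=
        fun s hs => ⟨h1.trans hs.1, hs.2.trans h3⟩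
      have wsbd : ∀ y s, s ∈ Icc t₁ t₂ → |u (y + h) s - u y s| ≤ W := by
        intro y s hs
        have hsT := hIcc s hs
        have hTL1 := abs_le.1 (timeLip (y + h) t₁ s h1 hs.1 hsT.2)
        have hTL2 := abs_le.1 (timeLip y t₁ s h1 hs.1 hsT.2)
        have hw1 := abs_le.1 (le_w y t₁ ht₁)
        have h6 : C * (s - t₁) ≤ C * Δ := by
          apply mul_le_mul_of_nonneg_left _ hC0
          rw [hΔ]; linarith [hs.2]
        rw [abs_le, hW]
        constructor
        · linarith [hTL1.1, hTL1.2, hTL2.1, hTL2.2, hw1.1, hw1.2]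
        · linarith [hTL1.1, hTL1.2, hTL2.1, hTL2.2, hw1.1, hw1.2]
      have gdiff : ∀ x' s, s ∈ Icc t₁ t₂ → |g (x' + h) s - g x' s| ≤ 2 * L_ρ * W := by
        intro x' s hs
        have hsT := hIcc s hs
        have hcont1 : Continuous fun y => deriv ρ (u (x' + h) s - u (y + h) s) :=
          hρ'cont.comp (continuous_const.sub ((ucx s hsT).comp (continuous_add_right h)))
        have hbd1 : ∀ y, |deriv ρ (u (x' + h) s - u (y + h) s)| ≤ C :=
          fun y => hρ'C _ (hudiff (x' + h) (y + h) s hsT)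
        have hI1 : Integrable (fun y => J (x' - y) * deriv ρ (u (x' + h) s - u (y + h) s)) :=
          hIntg x' _ hcont1 hbd1
        have hI2 := hIntg' x' s hsT
        have cov : g (x' + h) s = ∫ y, J (x' - y) * deriv ρ (u (x' + h) s - u (y + h) s) := by
          simp only [hg]
          have hcov := integral_add_right_eq_self (μ := volume)
            (fun z => J (x' + h - z) * deriv ρ (u (x' + h) s - u z s)) h
          rw [← hcov]
          congr 1
          funext y
          rw [show x' + h - (y + h) = x' - y by abel]
        have hdiff_eq : g (x' + h) s - g x' s
            = ∫ y, (J (x' - y) * deriv ρ (u (x' + h) s - u (y + h) s)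
                - J (x' - y) * deriv ρ (u x' s - u y s)) := by
          rw [cov]
          simp only [hg]
          rw [integral_sub hI1 hI2]
        rw [hdiff_eq, ← Real.norm_eq_abs]
        calc ‖∫ y, (J (x' - y) * deriv ρ (u (x' + h) s - u (y + h) s)
                - J (x' - y) * deriv ρ (u x' s - u y s))‖
            ≤ ∫ y, J (x' - y) * (2 * L_ρ * W) := by
              refine norm_integral_le_of_norm_le ((hJint.comp_sub_left x').mul_const _)
                (Filter.Eventually.of_forall fun y => ?_)
              rw [show J (x' - y) * deriv ρ (u (x' + h) s - u (y + h) s)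
                  - J (x' - y) * deriv ρ (u x' s - u y s)
                  = J (x' - y) * (deriv ρ (u (x' + h) s - u (y + h) s)
                    - deriv ρ (u x' s - u y s)) by ring,
                norm_mul, Real.norm_eq_abs, Real.norm_eq_abs, abs_of_nonneg (hJnonneg _)]
              refine mul_le_mul_of_nonneg_left ?_ (hJnonneg _)
              have hA : |u (x' + h) s - u (y + h) s| ≤ 2 * M := by
                calc |u (x' + h) s - u (y + h) s|
                    ≤ |u (x' + h) s| + |u (y + h) s| := abs_sub _ _
                  _ ≤ 2 * M := by linarith [MP (x' + h) s hsT, MP (y + h) s hsT]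
              have hB : |u x' s - u y s| ≤ 2 * M := by
                calc |u x' s - u y s| ≤ |u x' s| + |u y s| := abs_sub _ _
                  _ ≤ 2 * M := by linarith [MP x' s hsT, MP y s hsT]
              refine (hLρ _ _ hA hB).trans ?_
              have hAB : |(u (x' + h) s - u (y + h) s) - (u x' s - u y s)| ≤ 2 * W := by
                have e1 := wsbd x' s hs
                have e2 := wsbd y s hs
                rw [show (u (x' + h) s - u (y + h) s) - (u x' s - u y s)
                    = (u (x' + h) s - u x' s) - (u (y + h) s - u y s) by ring]
                calc |(u (x' + h) s - u x' s) - (u (y + h) s - u y s)|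
                    ≤ |u (x' + h) s - u x' s| + |u (y + h) s - u y s| := abs_sub _ _
                  _ ≤ 2 * W := by linarith
              calc L_ρ * |(u (x' + h) s - u (y + h) s) - (u x' s - u y s)|
                  ≤ L_ρ * (2 * W) := mul_le_mul_of_nonneg_left hAB hLρ0
                _ = 2 * L_ρ * W := by ring
          _ = 2 * L_ρ * W := by
              rw [integral_mul_const, integral_sub_left_eq_self, hJnorm, one_mul]
      refine w_le t₂ _ fun x' => ?_
      have e1 := hstep_eq (x' + h) t₁ t₂ h1 h2 h3
      have e2 := hstep_eq x' t₁ t₂ h1 h2 h3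
      have eint : (∫ s in t₁..t₂, g (x' + h) s) - ∫ s in t₁..t₂, g x' s
          = ∫ s in t₁..t₂, (g (x' + h) s - g x' s) :=
        (intervalIntegral.integral_sub (gII (x' + h) t₁ t₂ h1 h2 h3)
          (gII x' t₁ t₂ h1 h2 h3)).symm
      have hnorm : ‖∫ s in t₁..t₂, (g (x' + h) s - g x' s)‖ ≤ (2 * L_ρ * W) * |t₂ - t₁| := by
        refine intervalIntegral.norm_integral_le_of_norm_le_const fun s hs => ?_
        rw [uIoc_of_le h2] at hs
        rw [Real.norm_eq_abs]
        exact gdiff x' s ⟨hs.1.le, hs.2⟩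
      rw [Real.norm_eq_abs, abs_of_nonneg (by linarith : (0:ℝ) ≤ t₂ - t₁), ← hΔ] at hnorm
      have habs := abs_le.1 hnorm
      have hw1 := abs_le.1 (le_w x' t₁ ht₁)
      have hRHS : (1 + 2 * L_ρ * Δ) * w t₁ + 4 * L_ρ * C * Δ ^ 2
          = w t₁ + (2 * L_ρ * W) * Δ := by rw [hW]; ring
      rw [abs_le]
      constructor
      · linarith [habs.1, hw1.1, hRHS]
      · linarith [habs.2, hw1.2, hRHS]
    -- iterate the Grönwall step
    refine le_trans (le_w x t ht) ?_
    refine le_of_forall_pos_le_add fun ε hε => ?_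
    obtain ⟨N, hN⟩ := exists_nat_gt
      (max 1 (4 * L_ρ * C * t ^ 2 * Real.exp (2 * L_ρ * t) / ε))
    have hN1 : (1:ℝ) < N := lt_of_le_of_lt (le_max_left _ _) hN
    have hNpos : (0:ℝ) < N := lt_trans one_pos hN1
    have hNne : (N:ℝ) ≠ 0 := ne_of_gt hNpos
    set Δ : ℝ := t / N with hΔdef
    have ht0 : 0 ≤ t := ht.1
    have hΔ0 : 0 ≤ Δ := div_nonneg ht0 hNpos.le
    have hNΔ : (N:ℝ) * Δ = t := by rw [hΔdef]; field_simp
    set a : ℝ := 1 + 2 * L_ρ * Δ with ha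
    set c : ℝ := 4 * L_ρ * C * Δ ^ 2 with hc
    have ha1 : 1 ≤ a := by
      rw [ha]; nlinarith [mul_nonneg hLρ0 hΔ0]
    have hc0 : 0 ≤ c := by rw [hc]; positivity
    have hsteps : ∀ k, k < N → w ((k + 1 : ℕ) * Δ) ≤ a * w (k * Δ) + c := by
      intro k hk
      have hkr : ((k:ℝ) + 1) ≤ (N:ℝ) := by exact_mod_cast hk
      have h1 : 0 ≤ (k:ℝ) * Δ := by positivity
      have h2 : (k:ℝ) * Δ ≤ ((k:ℝ) + 1) * Δ :=
        mul_le_mul_of_nonneg_right (by linarith) hΔ0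
      have h3 : ((k:ℝ) + 1) * Δ ≤ T := by
        have h4 : ((k:ℝ) + 1) * Δ ≤ (N:ℝ) * Δ := mul_le_mul_of_nonneg_right hkr hΔ0
        rw [hNΔ] at h4
        linarith [ht.2]
      have hstep := Bstep ((k:ℝ) * Δ) (((k:ℝ) + 1) * Δ) h1 h2 h3
      rw [show ((k:ℝ) + 1) * Δ - (k:ℝ) * Δ = Δ by ring] at hstep
      push_cast
      rw [ha, hc]
      exact hstep
    have chain := statement8.auxChain a c ha1 hc0 (fun k => w (k * Δ))
      (by simpa using hw0 0 h0T) N hsteps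
    simp only [Nat.cast_zero, zero_mul, hNΔ] at chain
    -- chain : w t ≤ a ^ N * (w 0 + N * c)
    have hexp : a ^ N ≤ Real.exp (2 * L_ρ * t) := by
      rw [ha]
      refine (statement8.auxExp (2 * L_ρ * Δ) (by positivity) N).trans (le_of_eq ?_)
      rw [show (N:ℝ) * (2 * L_ρ * Δ) = 2 * L_ρ * ((N:ℝ) * Δ) by ring, hNΔ]
    have hNc : (N:ℝ) * c = 4 * L_ρ * C * t ^ 2 / N := by
      rw [hc, hΔdef]; field_simp
    have hw00 : 0 ≤ w 0 := hw0 0 h0T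
    have hNc0 : 0 ≤ (N:ℝ) * c := by positivity
    have hkey : w t ≤ Real.exp (2 * L_ρ * t) * (L₀ * ‖h‖ + 4 * L_ρ * C * t ^ 2 / N) := by
      refine chain.trans ?_
      have hin : w 0 + (N:ℝ) * c ≤ L₀ * ‖h‖ + 4 * L_ρ * C * t ^ 2 / N := by
        linarith [w0le, hNc]
      calc a ^ N * (w 0 + (N:ℝ) * c)
          ≤ Real.exp (2 * L_ρ * t) * (w 0 + (N:ℝ) * c) :=
            mul_le_mul_of_nonneg_right hexp (by linarith)
        _ ≤ Real.exp (2 * L_ρ * t) * (L₀ * ‖h‖ + 4 * L_ρ * C * t ^ 2 / N) :=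
            mul_le_mul_of_nonneg_left hin (Real.exp_pos _).le
    refine hkey.trans ?_
    have hlast : Real.exp (2 * L_ρ * t) * (4 * L_ρ * C * t ^ 2 / N) ≤ ε := by
      have hq : 4 * L_ρ * C * t ^ 2 * Real.exp (2 * L_ρ * t) / ε < N :=
        lt_of_le_of_lt (le_max_right _ _) hN
      have hq2 := (div_lt_iff₀ hε).1 hq
      rw [show Real.exp (2 * L_ρ * t) * (4 * L_ρ * C * t ^ 2 / N)
          = Real.exp (2 * L_ρ * t) * (4 * L_ρ * C * t ^ 2) / N by ring,
        div_le_iff₀ hNpos]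
      nlinarith
    calc Real.exp (2 * L_ρ * t) * (L₀ * ‖h‖ + 4 * L_ρ * C * t ^ 2 / N)
        = ‖h‖ * L₀ * Real.exp (2 * L_ρ * t)
          + Real.exp (2 * L_ρ * t) * (4 * L_ρ * C * t ^ 2 / N) := by ring
      _ ≤ ‖h‖ * L₀ * Real.exp (2 * L_ρ * t) + ε := by linarith
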